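/- For all real numbers a₁, a₂, a₃ and all Γ ∈ ℝ^{3×3}, setting α := −Γᵀ + tr(Γ)·𝟙₃ (Nye's formula), one has the identity a₁‖dev sym α‖² + a₂‖skew α‖² + a₃ (tr α)² = a₁‖dev sym Γ‖² + a₂‖skew Γ‖² + 4·a₃ (tr Γ)². Hence a quadratic isotropic curvature energy expressed in the dislocation density tensor α coincides, after the substitution of the trace coefficient, with the corresponding quadratic isotropic energy in the wryness tensor Γ. -/
import Mathlib


open Matrix

noncomputable section

/-- Symmetric part of a matrix. -/
def msym {n : ℕ} (X : Matrix (Fin n) (Fin n) ℝ) : Matrix (Fin n) (Fin n) ℝ :=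
  (1 / 2 : ℝ) • (X + Xᵀ)

/-- Skew-symmetric part of a matrix. -/
def mskew {n : ℕ} (X : Matrix (Fin n) (Fin n) ℝ) : Matrix (Fin n) (Fin n) ℝ :=
  (1 / 2 : ℝ) • (X - Xᵀ)

/-- Deviatoric (trace-free) part of a 3×3 matrix. -/
def mdev (X : Matrix (Fin 3) (Fin 3) ℝ) : Matrix (Fin 3) (Fin 3) ℝ :=
  X - ((Matrix.trace X) / 3) • (1 : Matrix (Fin 3) (Fin 3) ℝ)

/-- Squared Frobenius norm `‖X‖² = tr(XᵀX)`. -/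
def mnormSq {n : ℕ} (X : Matrix (Fin n) (Fin n) ℝ) : ℝ :=
  Matrix.trace (Xᵀ * X)

set_option maxHeartbeats 4000000

theorem stmt_5 (a₁ a₂ a₃ : ℝ) (Γ α : Matrix (Fin 3) (Fin 3) ℝ)
    (hα : α = -Γᵀ + (Matrix.trace Γ) • (1 : Matrix (Fin 3) (Fin 3) ℝ)) :
    a₁ * mnormSq (mdev (msym α)) + a₂ * mnormSq (mskew α)
        + a₃ * (Matrix.trace α) ^ 2
      = a₁ * mnormSq (mdev (msym Γ)) + a₂ * mnormSq (mskew Γ)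
        + 4 * a₃ * (Matrix.trace Γ) ^ 2 := by
  subst hα
  set_option maxHeartbeats 4000000 in
  simp only [mnormSq, mdev, msym, mskew, Matrix.trace, Matrix.diag, Matrix.mul_apply,
    Matrix.add_apply, Matrix.sub_apply, Matrix.smul_apply, Matrix.neg_apply,
    Matrix.transpose_apply, Matrix.one_apply, Fin.sum_univ_three, smul_eq_mul,
    Fin.isValue, one_ne_zero, zero_ne_one, if_true, if_false, Fin.reduceEq, reduceIte]
  set_option maxHeartbeats 4000000 in
  ring
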